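/- Suppose {K_1, …, K_p} and {K_1′, …, K_p′} are dust-like graph-directed sets on the same directed graph G, realized respectively by similitudes S_e on a compact metric space (X, d) and S_e′ on a compact metric space (X′, d′). If for each edge e the similitudes S_e and S_e′ have the same contraction ratio ρ_e, then K_i and K_i′ are bilipschitz equivalent for each i = 1, …, p. -/

import Mathlib

/-- `K ⊆ X` and `K' ⊆ Y` are bilipschitz equivalent (as metric spaces with the
induced metrics). -/
def BilipEquivSets {X Y : Type*} [MetricSpace X] [MetricSpace Y]
    (K : Set X) (K' : Set Y) : Prop :=
  ∃ f : K → K', Function.Bijective f ∧ ∃ C : ℝ, 1 ≤ C ∧ ∀ x y : K,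
    C⁻¹ * dist x y ≤ dist (f x) (f y) ∧ dist (f x) (f y) ≤ C * dist x y

/-- A realization of dust-like graph-directed sets on the directed graph with
`p` vertices, `a i j` edges from `i` to `j`, and ratio `ρ i j e` on each edge:
nonempty compact sets `K i` with `K i = ⋃_j ⋃_e S i j e '' (K j)` a pairwise
disjoint union, `S i j e` a similitude of ratio `ρ i j e`. -/
structure GDRealization (X : Type*) [MetricSpace X] {p : ℕ}
    (a : Fin p → Fin p → ℕ) (ρ : ∀ i j : Fin p, Fin (a i j) → ℝ) where
  S : ∀ i j : Fin p, Fin (a i j) → X → X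
  sim : ∀ i j e x y, dist (S i j e x) (S i j e y) = ρ i j e * dist x y
  K : Fin p → Set X
  nonempty : ∀ i, (K i).Nonempty
  compact : ∀ i, IsCompact (K i)
  union : ∀ i, K i = ⋃ j, ⋃ e, S i j e '' K j
  disj : ∀ i : Fin p, ∀ j j' : Fin p, ∀ e : Fin (a i j), ∀ e' : Fin (a i j'),
    (⟨j, e⟩ : Σ j, Fin (a i j)) ≠ ⟨j', e'⟩ →
    Disjoint (S i j e '' K j) (S i j' e' '' K j')

namespace GDProof

set_option linter.unusedSectionVars false

open Set Metric Filter

variable {X : Type*} [MetricSpace X] [CompactSpace X]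
  {p : ℕ} {a : Fin p → Fin p → ℕ} {ρ : ∀ i j : Fin p, Fin (a i j) → ℝ}

/-- Edge labels: an edge together with its endpoints. -/
abbrev Lam (a : Fin p → Fin p → ℕ) : Type := Σ j : Fin p, Σ k : Fin p, Fin (a j k)

/-- The ratio of an edge label. -/
def rhoF (ρ : ∀ i j : Fin p, Fin (a i j) → ℝ) (t : Lam a) : ℝ := ρ t.1 t.2.1 t.2.2

/-- A sequence of edge labels is a code if consecutive labels are chained. -/
def IsCode (c : ℕ → Lam a) : Prop := ∀ n, (c n).2.1 = (c (n + 1)).1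

/-- Product of ratios along the first `n` labels of `c`. -/
def wprod (ρ : ∀ i j : Fin p, Fin (a i j) → ℝ) (c : ℕ → Lam a) (n : ℕ) : ℝ :=
  ∏ k ∈ Finset.range n, rhoF ρ (c k)

variable (ρ) in
lemma wprod_zero (c : ℕ → Lam a) : wprod ρ c 0 = 1 := by simp [wprod]

variable (ρ) in
lemma wprod_succ (c : ℕ → Lam a) (n : ℕ) :
    wprod ρ c (n + 1) = wprod ρ c n * rhoF ρ (c n) := Finset.prod_range_succ _ _

lemma wprod_pos (hρ : ∀ i j e, ρ i j e ∈ Set.Ioo (0 : ℝ) 1) (c : ℕ → Lam a) (n : ℕ) :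
    0 < wprod ρ c n :=
  Finset.prod_pos fun k _ => (hρ (c k).1 (c k).2.1 (c k).2.2).1

lemma wprod_congr {c c' : ℕ → Lam a} {n : ℕ} (h : ∀ k < n, c k = c' k) :
    wprod ρ c n = wprod ρ c' n :=
  Finset.prod_congr rfl fun k hk => by rw [h k (Finset.mem_range.1 hk)]

lemma wprod_le_pow (hρ : ∀ i j e, ρ i j e ∈ Set.Ioo (0 : ℝ) 1) {r : ℝ}
    (hr : ∀ t : Lam a, rhoF ρ t ≤ r) (c : ℕ → Lam a) (n : ℕ) :
    wprod ρ c n ≤ r ^ n := by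
  calc wprod ρ c n ≤ ∏ _k ∈ Finset.range n, r :=
        Finset.prod_le_prod (fun k _ => ((hρ (c k).1 (c k).2.1 (c k).2.2).1).le)
          (fun k _ => hr (c k))
    _ = r ^ n := by rw [Finset.prod_const, Finset.card_range]

/-- A uniform bound `r < 1` on all ratios. -/
lemma exists_r (hρ : ∀ i j e, ρ i j e ∈ Set.Ioo (0 : ℝ) 1) :
    ∃ r : ℝ, 0 ≤ r ∧ r < 1 ∧ ∀ t : Lam a, rhoF ρ t ≤ r := by
  rcases isEmpty_or_nonempty (Lam a) with he | hne
  · exact ⟨1 / 2, by norm_num, by norm_num, fun t => (he.false t).elim⟩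
  · refine ⟨Finset.univ.sup' Finset.univ_nonempty (rhoF ρ), ?_, ?_, ?_⟩
    · obtain ⟨t⟩ := hne
      exact le_trans ((hρ t.1 t.2.1 t.2.2).1).le (Finset.le_sup' (rhoF ρ) (Finset.mem_univ t))
    · exact (Finset.sup'_lt_iff _).2 fun t _ => (hρ t.1 t.2.1 t.2.2).2
    · exact fun t => Finset.le_sup' (rhoF ρ) (Finset.mem_univ t)

variable (H : GDRealization X a ρ)

/-- The piece of `K t.1` corresponding to the edge label `t`. -/
def PieceL (t : Lam a) : Set X := H.S t.1 t.2.1 t.2.2 '' H.K t.2.1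

lemma pieceL_subset (t : Lam a) : PieceL H t ⊆ H.K t.1 := by
  rw [H.union t.1]
  intro x hx
  exact mem_iUnion.2 ⟨t.2.1, mem_iUnion.2 ⟨t.2.2, hx⟩⟩

lemma s_continuous (i j : Fin p) (e : Fin (a i j)) (hρ : ∀ i j e, ρ i j e ∈ Set.Ioo (0 : ℝ) 1) :
    Continuous (H.S i j e) := by
  refine (LipschitzWith.of_dist_le_mul (K := Real.toNNReal (ρ i j e)) fun x y => ?_).continuous
  rw [H.sim i j e x y, Real.coe_toNNReal _ ((hρ i j e).1).le]

lemma pieceL_compact (hρ : ∀ i j e, ρ i j e ∈ Set.Ioo (0 : ℝ) 1) (t : Lam a) :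
    IsCompact (PieceL H t) :=
  (H.compact t.2.1).image (s_continuous H t.1 t.2.1 t.2.2 hρ)

lemma pieceL_nonempty (t : Lam a) : (PieceL H t).Nonempty :=
  (H.nonempty t.2.1).image _

lemma pieceL_disjoint {t t' : Lam a} (h1 : t.1 = t'.1) (h2 : t ≠ t') :
    Disjoint (PieceL H t) (PieceL H t') := by
  obtain ⟨i, j, e⟩ := t
  obtain ⟨i', j', e'⟩ := t'
  dsimp at h1
  subst h1
  exact H.disj i j j' e e' fun hne => h2 (congrArg (Sigma.mk i) hne)

lemma pieceL_unique {t t' : Lam a} (h1 : t.1 = t'.1) {x : X}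
    (hx : x ∈ PieceL H t) (hx' : x ∈ PieceL H t') : t = t' := by
  by_contra h2
  exact Set.disjoint_left.1 (pieceL_disjoint H h1 h2) hx hx'

/-- A point of some `K i`, together with its index. -/
structure Pt where
  i : Fin p
  x : X
  hx : x ∈ H.K i

variable {H}

lemma exists_step (q : Pt H) :
    ∃ (j : Fin p) (e : Fin (a q.i j)) (y : X), y ∈ H.K j ∧ H.S q.i j e y = q.x := by
  have := q.hx
  rw [H.union q.i] at this
  obtain ⟨j, hj⟩ := mem_iUnion.1 this
  obtain ⟨e, he⟩ := mem_iUnion.1 hj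
  obtain ⟨y, hy, hye⟩ := he
  exact ⟨j, e, y, hy, hye⟩

noncomputable def stepData (q : Pt H) :
    Σ (j : Fin p) (e : Fin (a q.i j)), { y : X // y ∈ H.K j ∧ H.S q.i j e y = q.x } :=
  Classical.choice (by
    obtain ⟨j, e, y, hy, hye⟩ := exists_step q
    exact ⟨⟨j, e, y, hy, hye⟩⟩)

noncomputable def step (q : Pt H) : Pt H :=
  ⟨(stepData q).1, (stepData q).2.2.1, (stepData q).2.2.2.1⟩

noncomputable def edgeOf (q : Pt H) : Fin (a q.i (step q).i) := (stepData q).2.1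

lemma step_spec (q : Pt H) : H.S q.i (step q).i (edgeOf q) (step q).x = q.x :=
  (stepData q).2.2.2.2

noncomputable def orbit (q : Pt H) (n : ℕ) : Pt H := (step)^[n] q

lemma orbit_zero (q : Pt H) : orbit q 0 = q := rfl

lemma orbit_succ (q : Pt H) (n : ℕ) : orbit q (n + 1) = step (orbit q n) :=
  Function.iterate_succ_apply' _ _ _

/-- The code of a point. -/
noncomputable def codeOf (q : Pt H) (n : ℕ) : Lam a :=
  ⟨(orbit q n).i, (step (orbit q n)).i, edgeOf (orbit q n)⟩

lemma isCode_codeOf (q : Pt H) : IsCode (codeOf q) := by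
  intro n
  show (step (orbit q n)).i = (orbit q (n + 1)).i
  rw [orbit_succ]

variable (H) in
/-- The composition of the first `n` similitudes along the code `c`. -/
def cylMap (c : ℕ → Lam a) : ℕ → X → X
  | 0 => id
  | n + 1 => cylMap c n ∘ H.S (c n).1 (c n).2.1 (c n).2.2

lemma cylMap_zero (c : ℕ → Lam a) : cylMap H c 0 = id := rfl

lemma cylMap_succ (c : ℕ → Lam a) (n : ℕ) :
    cylMap H c (n + 1) = cylMap H c n ∘ H.S (c n).1 (c n).2.1 (c n).2.2 := rfl

lemma cylMap_dist (c : ℕ → Lam a) (n : ℕ) (x y : X) :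
    dist (cylMap H c n x) (cylMap H c n y) = wprod ρ c n * dist x y := by
  induction n generalizing x y with
  | zero => simp [cylMap_zero, wprod_zero]
  | succ n ih =>
    rw [cylMap_succ]
    simp only [Function.comp_apply]
    rw [ih, H.sim, wprod_succ]
    unfold rhoF
    ring

lemma cylMap_continuous (hρ : ∀ i j e, ρ i j e ∈ Set.Ioo (0 : ℝ) 1) (c : ℕ → Lam a) (n : ℕ) :
    Continuous (cylMap H c n) := by
  induction n with
  | zero => exact continuous_id
  | succ n ih => exact ih.comp (s_continuous H _ _ _ hρ)

lemma cylMap_congr {c c' : ℕ → Lam a} {n : ℕ} (h : ∀ k < n, c k = c' k) :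
    cylMap H c n = cylMap H c' n := by
  induction n with
  | zero => rfl
  | succ n ih =>
    rw [cylMap_succ, cylMap_succ, ih (fun k hk => h k (hk.trans (Nat.lt_succ_self n))),
      h n (Nat.lt_succ_self n)]

lemma cylMap_injective (hρ : ∀ i j e, ρ i j e ∈ Set.Ioo (0 : ℝ) 1) (c : ℕ → Lam a) (n : ℕ) :
    Function.Injective (cylMap H c n) := by
  intro u v huv
  have h := cylMap_dist (H := H) c n u v
  rw [huv, dist_self] at h
  have hw := wprod_pos hρ c n
  have : dist u v = 0 := by
    rcases mul_eq_zero.1 h.symm with h' | h'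
    · exact absurd h' hw.ne'
    · exact h'
  exact dist_eq_zero.1 this

variable (H) in
/-- The `n`-th cylinder set of the code `c`. -/
def CylSet (c : ℕ → Lam a) (n : ℕ) : Set X := cylMap H c n '' H.K (c n).1

lemma cylSet_zero (c : ℕ → Lam a) : CylSet H c 0 = H.K (c 0).1 := by
  simp [CylSet, cylMap_zero]

lemma cylSet_succ {c : ℕ → Lam a} (hc : IsCode c) (n : ℕ) :
    CylSet H c (n + 1) = cylMap H c n '' PieceL H (c n) := by
  unfold CylSet PieceL
  rw [cylMap_succ, Set.image_comp, ← hc n]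

lemma cylSet_antitone {c : ℕ → Lam a} (hc : IsCode c) (n : ℕ) :
    CylSet H c (n + 1) ⊆ CylSet H c n := by
  rw [cylSet_succ hc n]
  exact Set.image_mono (pieceL_subset H (c n))

lemma cylSet_compact (hρ : ∀ i j e, ρ i j e ∈ Set.Ioo (0 : ℝ) 1) (c : ℕ → Lam a) (n : ℕ) :
    IsCompact (CylSet H c n) :=
  (H.compact _).image (cylMap_continuous hρ c n)

lemma cylSet_nonempty (c : ℕ → Lam a) (n : ℕ) : (CylSet H c n).Nonempty :=
  (H.nonempty _).image _

lemma cylMap_orbit (q : Pt H) (n : ℕ) :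
    cylMap H (codeOf q) n (orbit q n).x = q.x := by
  induction n with
  | zero => rfl
  | succ n ih =>
    rw [cylMap_succ, orbit_succ]
    show cylMap H (codeOf q) n
      (H.S (codeOf q n).1 (codeOf q n).2.1 (codeOf q n).2.2 (step (orbit q n)).x) = q.x
    have hs : H.S (codeOf q n).1 (codeOf q n).2.1 (codeOf q n).2.2 (step (orbit q n)).x
        = (orbit q n).x := step_spec (orbit q n)
    rw [hs, ih]

lemma mem_cylSet_orbit (q : Pt H) (n : ℕ) : q.x ∈ CylSet H (codeOf q) n :=
  ⟨(orbit q n).x, (orbit q n).hx, cylMap_orbit q n⟩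

lemma orbit_mem_pieceL (q : Pt H) (n : ℕ) :
    (orbit q n).x ∈ PieceL H (codeOf q n) :=
  ⟨(step (orbit q n)).x, (step (orbit q n)).hx, step_spec (orbit q n)⟩

lemma fst_eq_of_prefix {c c' : ℕ → Lam a} (hc : IsCode c) (hc' : IsCode c')
    (h0 : (c 0).1 = (c' 0).1) (n : ℕ) (h : ∀ k < n, c k = c' k) :
    (c n).1 = (c' n).1 := by
  cases n with
  | zero => exact h0
  | succ m => rw [← hc m, ← hc' m, h m (Nat.lt_succ_self m)]

lemma dist_le_of_mem_cylSet (hρ : ∀ i j e, ρ i j e ∈ Set.Ioo (0 : ℝ) 1)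
    {c : ℕ → Lam a} {n : ℕ} {u v : X}
    (hu : u ∈ CylSet H c n) (hv : v ∈ CylSet H c n) :
    dist u v ≤ wprod ρ c n * Metric.diam (Set.univ : Set X) := by
  obtain ⟨u', _, rfl⟩ := hu
  obtain ⟨v', _, rfl⟩ := hv
  rw [cylMap_dist]
  exact mul_le_mul_of_nonneg_left
    (Metric.dist_le_diam_of_mem isCompact_univ.isBounded (mem_univ _) (mem_univ _))
    (wprod_pos hρ c n).le

lemma eq_of_mem_all (hρ : ∀ i j e, ρ i j e ∈ Set.Ioo (0 : ℝ) 1) {c : ℕ → Lam a} {u v : X}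
    (hu : ∀ n, u ∈ CylSet H c n) (hv : ∀ n, v ∈ CylSet H c n) : u = v := by
  obtain ⟨r, hr0, hr1, hrb⟩ := exists_r hρ
  set D := Metric.diam (Set.univ : Set X) with hD
  have hDn : 0 ≤ D := Metric.diam_nonneg
  have hn : ∀ n, dist u v ≤ r ^ n * D := fun n =>
    le_trans (dist_le_of_mem_cylSet hρ (hu n) (hv n))
      (mul_le_mul_of_nonneg_right (wprod_le_pow hρ hrb c n) hDn)
  have ht : Tendsto (fun n : ℕ => r ^ n * D) atTop (nhds 0) := by
    simpa using (tendsto_pow_atTop_nhds_zero_of_lt_one hr0 hr1).mul_const D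
  have : dist u v ≤ 0 := ge_of_tendsto' ht hn
  exact dist_le_zero.1 this

lemma sep_of_disjoint {A B : Set X} (hA : IsCompact A) (hB : IsCompact B)
    (hd : Disjoint A B) : ∃ δ : ℝ, 0 < δ ∧ ∀ x ∈ A, ∀ y ∈ B, δ ≤ dist x y := by
  rcases A.eq_empty_or_nonempty with rfl | hAne
  · exact ⟨1, one_pos, fun x hx => absurd hx (Set.notMem_empty x)⟩
  rcases B.eq_empty_or_nonempty with rfl | hBne
  · exact ⟨1, one_pos, fun x _ y hy => absurd hy (Set.notMem_empty y)⟩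
  obtain ⟨z, hz, hzmin⟩ := (hA.prod hB).exists_isMinOn (hAne.prod hBne)
    (continuous_dist.continuousOn)
  refine ⟨dist z.1 z.2, ?_, fun x hx y hy => hzmin (Set.mk_mem_prod hx hy)⟩
  rw [dist_pos]
  intro hzz
  exact Set.disjoint_left.1 hd ((Set.mem_prod.1 hz).1) (hzz ▸ (Set.mem_prod.1 hz).2)

variable (H) in
lemma exists_sep (hρ : ∀ i j e, ρ i j e ∈ Set.Ioo (0 : ℝ) 1) :
    ∃ δ : ℝ, 0 < δ ∧ ∀ t t' : Lam a, t.1 = t'.1 → t ≠ t' →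
      ∀ x ∈ PieceL H t, ∀ y ∈ PieceL H t', δ ≤ dist x y := by
  classical
  have hsep : ∀ tt' : Lam a × Lam a, ∃ δ : ℝ, 0 < δ ∧
      (tt'.1.1 = tt'.2.1 → tt'.1 ≠ tt'.2 →
        ∀ x ∈ PieceL H tt'.1, ∀ y ∈ PieceL H tt'.2, δ ≤ dist x y) := by
    rintro ⟨t, t'⟩
    by_cases h : t.1 = t'.1 ∧ t ≠ t'
    · obtain ⟨δ, hδ, hsep⟩ := sep_of_disjoint (pieceL_compact H hρ t) (pieceL_compact H hρ t')
        (pieceL_disjoint H h.1 h.2)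
      exact ⟨δ, hδ, fun _ _ => hsep⟩
    · exact ⟨1, one_pos, fun h1 h2 => absurd ⟨h1, h2⟩ h⟩
  choose g hg1 hg2 using hsep
  rcases isEmpty_or_nonempty (Lam a × Lam a) with he | hne
  · exact ⟨1, one_pos, fun t t' => (he.false (t, t')).elim⟩
  · refine ⟨Finset.univ.inf' Finset.univ_nonempty g, ?_, ?_⟩
    · exact (Finset.lt_inf'_iff _).2 fun b _ => hg1 b
    · intro t t' h1 h2 x hx y hy
      exact le_trans (Finset.inf'_le g (Finset.mem_univ (t, t')))
        (hg2 (t, t') h1 h2 x hx y hy)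

variable (H) in
lemma exists_limPoint (hρ : ∀ i j e, ρ i j e ∈ Set.Ioo (0 : ℝ) 1)
    {c : ℕ → Lam a} (hc : IsCode c) :
    ∃ x : X, ∀ n, x ∈ CylSet H c n := by
  obtain ⟨x, hx⟩ := IsCompact.nonempty_iInter_of_sequence_nonempty_isCompact_isClosed
    (fun n => CylSet H c n) (fun n => cylSet_antitone hc n) (fun n => cylSet_nonempty c n)
    (cylSet_compact hρ c 0) (fun n => (cylSet_compact hρ c n).isClosed)
  exact ⟨x, fun n => mem_iInter.1 hx n⟩

lemma codeOf_eq_of_mem (hρ : ∀ i j e, ρ i j e ∈ Set.Ioo (0 : ℝ) 1) (q : Pt H)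
    {c : ℕ → Lam a} (hc : IsCode c) (h0 : (c 0).1 = q.i)
    (hm : ∀ n, q.x ∈ CylSet H c n) : ∀ n, codeOf q n = c n := by
  intro n
  induction n using Nat.strong_induction_on with
  | _ n ih =>
  have hfst : (codeOf q n).1 = (c n).1 :=
    fst_eq_of_prefix (isCode_codeOf q) hc h0.symm n ih
  have hcyl : cylMap H (codeOf q) n = cylMap H c n := cylMap_congr ih
  have h1 : q.x ∈ cylMap H c n '' PieceL H (c n) := by
    rw [← cylSet_succ hc n]; exact hm (n + 1)
  obtain ⟨z, hz, hze⟩ := h1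
  have h2 : z = (orbit q n).x := by
    apply cylMap_injective hρ c n
    rw [hze, ← hcyl, cylMap_orbit]
  rw [h2] at hz
  exact pieceL_unique H hfst (orbit_mem_pieceL q n) hz

end GDProof

/-- **Lemma (Rao–Ruan–Xi).** If `{K_i}` and `{K_i'}` are dust-like
graph-directed sets on the same directed graph, realized in compact metric
spaces `X` and `X'` by similitudes with the same ratios `ρ_e ∈ (0,1)` on each
edge `e`, then `K_i` and `K_i'` are bilipschitz equivalent for each `i`. -/
theorem gdRealization_same_graph_bilip
    {X X' : Type*} [MetricSpace X] [CompactSpace X] [MetricSpace X'] [CompactSpace X']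
    {p : ℕ} (a : Fin p → Fin p → ℕ) (ρ : ∀ i j : Fin p, Fin (a i j) → ℝ)
    (hρ : ∀ i j e, ρ i j e ∈ Set.Ioo (0 : ℝ) 1)
    (G : GDRealization X a ρ) (G' : GDRealization X' a ρ) :
    ∀ i : Fin p, BilipEquivSets (G.K i) (G'.K i) := by
  classical
  intro i0
  open GDProof in
  obtain ⟨δ, hδ, hsep⟩ := exists_sep G hρ
  obtain ⟨δ', hδ', hsep'⟩ := exists_sep G' hρ
  set D := Metric.diam (Set.univ : Set X) with hDdef
  set D' := Metric.diam (Set.univ : Set X') with hD'def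
  have hD : 0 ≤ D := Metric.diam_nonneg
  have hD' : 0 ≤ D' := Metric.diam_nonneg
  -- the coding-limit map
  have hF : ∀ q : Pt G, ∃ x' : X', ∀ n, x' ∈ CylSet G' (codeOf q) n := fun q =>
    exists_limPoint G' hρ (isCode_codeOf q)
  choose F hFm using hF
  set qx : ↥(G.K i0) → Pt G := fun x => ⟨i0, x.1, x.2⟩ with hqx
  have hfmem : ∀ x : ↥(G.K i0), F (qx x) ∈ G'.K i0 := by
    intro x
    have h0 := hFm (qx x) 0
    rw [cylSet_zero] at h0
    exact h0
  set f : ↥(G.K i0) → ↥(G'.K i0) := fun x => ⟨F (qx x), hfmem x⟩ with hf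
  -- the key estimates for distinct points
  have key : ∀ x y : ↥(G.K i0), x.1 ≠ y.1 → ∃ w : ℝ, 0 < w ∧
      δ * w ≤ dist x.1 y.1 ∧ dist x.1 y.1 ≤ w * D ∧
      δ' * w ≤ dist (F (qx x)) (F (qx y)) ∧ dist (F (qx x)) (F (qx y)) ≤ w * D' := by
    intro x y hxy
    have hne : ∃ n, codeOf (qx x) n ≠ codeOf (qx y) n := by
      by_contra h
      push_neg at h
      apply hxy
      have hcf : codeOf (qx x) = codeOf (qx y) := funext h
      refine eq_of_mem_all hρ (c := codeOf (qx x)) (fun n => mem_cylSet_orbit (qx x) n) ?_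
      rw [hcf]
      exact fun n => mem_cylSet_orbit (qx y) n
    set N := Nat.find hne with hN
    have hdiff : codeOf (qx x) N ≠ codeOf (qx y) N := Nat.find_spec hne
    have hpre : ∀ k < N, codeOf (qx x) k = codeOf (qx y) k := fun k hk =>
      not_not.1 (Nat.find_min hne hk)
    set w := wprod ρ (codeOf (qx x)) N with hw0
    have hw : 0 < w := wprod_pos hρ _ N
    have hfst : (codeOf (qx x) N).1 = (codeOf (qx y) N).1 :=
      fst_eq_of_prefix (c := codeOf (qx x)) (c' := codeOf (qx y))
        (isCode_codeOf _) (isCode_codeOf _) rfl N hpre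
    have hcylm : cylMap G (codeOf (qx x)) N = cylMap G (codeOf (qx y)) N :=
      cylMap_congr hpre
    have hcylm' : cylMap G' (codeOf (qx x)) N = cylMap G' (codeOf (qx y)) N :=
      cylMap_congr hpre
    have hwy : wprod ρ (codeOf (qx y)) N = w := (wprod_congr hpre).symm
    -- distance in X
    have hdistxy : dist x.1 y.1
        = w * dist (orbit (qx x) N).x (orbit (qx y) N).x := by
      have h1 : x.1 = cylMap G (codeOf (qx x)) N (orbit (qx x) N).x :=
        (cylMap_orbit (qx x) N).symm
      have h2 : y.1 = cylMap G (codeOf (qx x)) N (orbit (qx y) N).x := by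
        rw [hcylm]; exact (cylMap_orbit (qx y) N).symm
      rw [h1, h2, cylMap_dist (H := G)]
    have hlow : δ * w ≤ dist x.1 y.1 := by
      rw [hdistxy, mul_comm δ w]
      exact mul_le_mul_of_nonneg_left
        (hsep _ _ hfst hdiff _ (orbit_mem_pieceL (qx x) N) _ (orbit_mem_pieceL (qx y) N))
        hw.le
    have hupp : dist x.1 y.1 ≤ w * D := by
      have hyset : CylSet G (codeOf (qx y)) N = CylSet G (codeOf (qx x)) N := by
        unfold GDProof.CylSet
        rw [hcylm, hfst]
      refine dist_le_of_mem_cylSet hρ (mem_cylSet_orbit (qx x) N) ?_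
      rw [← hyset]
      exact mem_cylSet_orbit (qx y) N
    -- distance in X'
    have hupp' : dist (F (qx x)) (F (qx y)) ≤ w * D' := by
      have hyset : CylSet G' (codeOf (qx y)) N = CylSet G' (codeOf (qx x)) N := by
        unfold GDProof.CylSet
        rw [hcylm', hfst]
      refine dist_le_of_mem_cylSet hρ (hFm (qx x) N) ?_
      rw [← hyset]
      exact hFm (qx y) N
    have hlow' : δ' * w ≤ dist (F (qx x)) (F (qx y)) := by
      have h1 := hFm (qx x) (N + 1)
      have h2 := hFm (qx y) (N + 1)
      rw [cylSet_succ (isCode_codeOf _) N] at h1 h2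
      obtain ⟨u, hu, hue⟩ := h1
      obtain ⟨v, hv, hve⟩ := h2
      rw [← hue, ← hve, ← hcylm', cylMap_dist (H := G'), mul_comm δ' _]
      exact mul_le_mul_of_nonneg_left (hsep' _ _ hfst hdiff _ hu _ hv) hw.le
    exact ⟨w, hw, hlow, hupp, hlow', hupp'⟩
  -- the constant
  set C : ℝ := (1 + D + D') * (1 + δ⁻¹ + δ'⁻¹) with hC
  have hδi : 0 < δ⁻¹ := inv_pos.2 hδ
  have hδ'i : 0 < δ'⁻¹ := inv_pos.2 hδ'
  have hC1 : 1 ≤ C := by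
    have h1 : (1 : ℝ) ≤ 1 + D + D' := by linarith
    have h2 : (1 : ℝ) ≤ 1 + δ⁻¹ + δ'⁻¹ := by linarith
    nlinarith
  have hCpos : 0 < C := lt_of_lt_of_le one_pos hC1
  have hCδ : D' ≤ C * δ := by
    have key1 : (1 : ℝ) ≤ (1 + δ⁻¹ + δ'⁻¹) * δ := by
      have h1 : δ⁻¹ * δ = 1 := inv_mul_cancel₀ hδ.ne'
      nlinarith [mul_pos hδ'i hδ]
    calc D' ≤ (1 + D + D') * 1 := by linarith
      _ ≤ (1 + D + D') * ((1 + δ⁻¹ + δ'⁻¹) * δ) :=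
          mul_le_mul_of_nonneg_left key1 (by linarith)
      _ = C * δ := by rw [hC]; ring
  have hCδ' : D ≤ C * δ' := by
    have key1 : (1 : ℝ) ≤ (1 + δ⁻¹ + δ'⁻¹) * δ' := by
      have h1 : δ'⁻¹ * δ' = 1 := inv_mul_cancel₀ hδ'.ne'
      nlinarith [mul_pos hδi hδ']
    calc D ≤ (1 + D + D') * 1 := by linarith
      _ ≤ (1 + D + D') * ((1 + δ⁻¹ + δ'⁻¹) * δ') :=
          mul_le_mul_of_nonneg_left key1 (by linarith)
      _ = C * δ' := by rw [hC]; ring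
  refine ⟨f, ⟨?_, ?_⟩, C, hC1, ?_⟩
  · -- injective
    intro x y hxyf
    by_contra hne
    have hxy : x.1 ≠ y.1 := fun h => hne (Subtype.ext h)
    obtain ⟨w, hw, _, _, hlow', _⟩ := key x y hxy
    have : F (qx x) = F (qx y) := congrArg Subtype.val hxyf
    rw [this, dist_self] at hlow'
    nlinarith
  · -- surjective
    intro y'
    set q' : Pt G' := ⟨i0, y'.1, y'.2⟩ with hq'
    obtain ⟨x, hx⟩ := exists_limPoint G hρ (isCode_codeOf q')
    have hx0 : x ∈ G.K i0 := by
      have h0 := hx 0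
      rw [cylSet_zero] at h0
      exact h0
    refine ⟨⟨x, hx0⟩, ?_⟩
    have hcode : ∀ n, codeOf (⟨i0, x, hx0⟩ : Pt G) n = codeOf q' n :=
      codeOf_eq_of_mem hρ _ (isCode_codeOf q') rfl hx
    have hcf : codeOf (⟨i0, x, hx0⟩ : Pt G) = codeOf q' := funext hcode
    apply Subtype.ext
    show F (qx ⟨x, hx0⟩) = y'.1
    have hqxeq : qx ⟨x, hx0⟩ = ⟨i0, x, hx0⟩ := rfl
    refine eq_of_mem_all hρ (c := codeOf q') ?_ (fun n => mem_cylSet_orbit q' n)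
    intro n
    have := hFm (qx ⟨x, hx0⟩) n
    rw [hqxeq, hcf] at this
    exact this
  · -- the bilipschitz estimates
    intro x y
    by_cases hxy : x.1 = y.1
    · have hxys : x = y := Subtype.ext hxy
      subst hxys
      simp [dist_self]
    · obtain ⟨w, hw, hlow, hupp, hlow', hupp'⟩ := key x y hxy
      have hdxy : dist x y = dist x.1 y.1 := Subtype.dist_eq x y
      have hdf : dist (f x) (f y) = dist (F (qx x)) (F (qx y)) := Subtype.dist_eq _ _
      constructor
      · rw [inv_mul_le_iff₀ hCpos, hdxy, hdf]
        calc dist x.1 y.1 ≤ w * D := hupp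
          _ ≤ w * (C * δ') := mul_le_mul_of_nonneg_left hCδ' hw.le
          _ = C * (δ' * w) := by ring
          _ ≤ C * dist (F (qx x)) (F (qx y)) :=
              mul_le_mul_of_nonneg_left hlow' hCpos.le
      · rw [hdxy, hdf]
        calc dist (F (qx x)) (F (qx y)) ≤ w * D' := hupp'
          _ ≤ w * (C * δ) := mul_le_mul_of_nonneg_left hCδ hw.le
          _ = C * (δ * w) := by ring
          _ ≤ C * dist x.1 y.1 := mul_le_mul_of_nonneg_left hlow hCpos.le
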